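/- Let a_j := i·e_j ∈ ℂ^{n+1} for 1 ≤ j ≤ n+1 and r_j := 1, and S_j := {z ∈ ℂ^{n+1} | (z−a_j)² = 1}. Then the spheres S₁,…,S_{n+1} are in general position: for every nonempty I ⊆ {1,…,n+1} there is no point z ∈ ⋂_{j∈I} S_j at which the gradients {z − a_j}_{j∈I} are linearly dependent over ℂ. -/
import Mathlib


/-- Let `a_j := i·e_j ∈ ℂ^{n+1}` for `1 ≤ j ≤ N ≤ n+1`, `r_j := 1`, and
`S_j := {z | (z − a_j)² = 1}` (sum-of-squares).  The spheres `S₁,…,S_N` are in general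
position: for every nonempty `I ⊆ {1,…,N}` there is no point `z ∈ ⋂_{j∈I} S_j` at which the
gradients `{z − a_j}_{j∈I}` are linearly dependent over `ℂ`. -/
theorem stmt_9 (n N : ℕ) (hN : N ≤ n + 1) :
    let a : Fin N → Fin (n + 1) → ℂ := fun i j => if (j : ℕ) = (i : ℕ) then Complex.I else 0
    let S : Fin N → Set (Fin (n + 1) → ℂ) := fun i => {z | ∑ j, (z j - a i j) ^ 2 = 1}
    ∀ I : Finset (Fin N), I.Nonempty → ∀ z ∈ ⋂ i ∈ I, S i,
      LinearIndependent ℂ (fun i : I => fun j => z j - a i.1 j) := by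
  intro a S I hI z hz
  have hz' : ∀ i ∈ I, ∑ j, (z j - a i j) ^ 2 = 1 := by
    intro i hi
    exact Set.mem_iInter₂.mp hz i hi
  set ji : Fin N → Fin (n + 1) := fun i => ⟨i, lt_of_lt_of_le i.2 hN⟩ with hjidef
  have hjiinj : Function.Injective ji := by
    intro i i' h
    rw [Fin.ext_iff] at h ⊢
    exact h
  have ha : ∀ (i : Fin N) (j : Fin (n + 1)),
      a i j = if j = ji i then Complex.I else 0 := by
    intro i j
    simp only [a, ji, Fin.ext_iff]
  -- the sphere equations, expanded
  have expand : ∀ i : Fin N,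
      ∑ j, (z j - a i j) ^ 2 = (∑ j, z j ^ 2) - 2 * Complex.I * z (ji i) - 1 := by
    intro i
    have step : ∀ j : Fin (n + 1), (z j - a i j) ^ 2 =
        z j ^ 2 - (if j = ji i then 2 * Complex.I * z j else 0)
          + (if j = ji i then (-1 : ℂ) else 0) := by
      intro j
      rw [ha]
      split
      · linear_combination Complex.I_sq
      · ring
    rw [Finset.sum_congr rfl fun j _ => step j]
    rw [Finset.sum_add_distrib, Finset.sum_sub_distrib]
    simp [Finset.sum_ite_eq']
    ring
  have h4 : ∀ i ∈ I, (∑ j, z j ^ 2) - 2 * Complex.I * z (ji i) - 1 = 1 := by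
    intro i hi
    rw [← expand i]
    exact hz' i hi
  rw [Fintype.linearIndependent_iff]
  intro g hg k
  set s : ℂ := ∑ i : I, g i with hs
  have hpt : ∀ j : Fin (n + 1), ∑ i : I, g i * (z j - a i.1 j) = 0 := by
    intro j
    have := congrFun hg j
    simpa [Finset.sum_apply] using this
  -- coordinate equations
  have h2 : ∀ k' : I, (k' : Fin N) ∈ I → s * z (ji k') = g k' * Complex.I := by
    intro k' _
    have h := hpt (ji k')
    have hsplit : ∀ i : I, g i * (z (ji k') - a i.1 (ji k')) =
        g i * z (ji k') - (if i = k' then g i * Complex.I else 0) := by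
      intro i
      rw [ha]
      have : (ji k' = ji i.1) ↔ (i = k') := by
        constructor
        · intro h'; exact Subtype.ext (hjiinj h'.symm)
        · intro h'; rw [h']
      rw [if_congr this rfl rfl]
      split <;> ring
    rw [Finset.sum_congr rfl fun i _ => hsplit i, Finset.sum_sub_distrib] at h
    simp [Finset.sum_ite_eq'] at h
    rw [← Finset.sum_mul] at h
    simp only [hs, Finset.univ_eq_attach]
    linear_combination h
  have h3 : ∀ j : Fin (n + 1), (∀ i ∈ I, (j : ℕ) ≠ (i : ℕ)) → s * z j = 0 := by
    intro j hj
    have h := hpt j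
    have hsplit : ∀ i : I, g i * (z j - a i.1 j) = g i * z j := by
      intro i
      rw [ha]
      rw [if_neg (by simpa [ji, Fin.ext_iff] using hj i.1 i.2)]
      ring
    rw [Finset.sum_congr rfl fun i _ => hsplit i, ← Finset.sum_mul] at h
    exact h
  by_cases hs0 : s = 0
  · have h := h2 k k.2
    rw [hs0, zero_mul] at h
    have := h.symm
    simpa [Complex.I_ne_zero] using this
  · exfalso
    set Z : ℂ := ∑ j, z j ^ 2 with hZdef
    set w : ℂ := (Z - 2) / (2 * Complex.I) with hwdef
    have hw : ∀ i ∈ I, z (ji i) = w := by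
      intro i hi
      have h := h4 i hi
      rw [hwdef]
      field_simp
      linear_combination -h
    have hgw : ∀ k' : I, g k' = s * w * (-Complex.I) := by
      intro k'
      have h := h2 k' k'.2
      rw [hw k' k'.2] at h
      have : g k' * Complex.I * (-Complex.I) = s * w * (-Complex.I) := by rw [← h]
      rw [mul_assoc] at this
      rw [show Complex.I * (-Complex.I) = 1 by
        rw [mul_neg]; rw [Complex.I_mul_I]; ring] at this
      simpa using this
    have hm : s = (I.card : ℂ) * (s * w * (-Complex.I)) := by
      have hsum : ∑ i : I, g i = ∑ _i : I, s * w * (-Complex.I) :=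
        Finset.sum_congr rfl (fun i _ => hgw i)
      calc s = ∑ i : I, g i := hs
        _ = ∑ _i : I, s * w * (-Complex.I) := hsum
        _ = (I.card : ℂ) * (s * w * (-Complex.I)) := by
            rw [Finset.sum_const, Finset.card_univ, Fintype.card_coe, nsmul_eq_mul]
    have hmw : (I.card : ℂ) * w = Complex.I := by
      have h1 : s * (1 : ℂ) = s * ((I.card : ℂ) * w * (-Complex.I)) := by
        linear_combination hm
      have h2' : (1 : ℂ) = (I.card : ℂ) * w * (-Complex.I) := mul_left_cancel₀ hs0 h1
      linear_combination (-Complex.I) * h2' + (I.card : ℂ) * w * Complex.I_sq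
    -- compute Z
    have hT : Z = (I.card : ℂ) * w ^ 2 := by
      have hzero : ∀ j ∈ Finset.univ, j ∉ I.image ji → z j ^ 2 = 0 := by
        intro j _ hj
        have hne : ∀ i ∈ I, (j : ℕ) ≠ (i : ℕ) := by
          intro i hi hcontra
          exact hj (Finset.mem_image.mpr ⟨i, hi, by simp [ji, Fin.ext_iff, hcontra.symm]⟩)
        have := h3 j hne
        have hz0 : z j = 0 := by
          rcases mul_eq_zero.mp this with h | h
          · exact absurd h hs0
          · exact h
        rw [hz0]; ring
      have h1 : Z = ∑ j ∈ I.image ji, z j ^ 2 :=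
        (Finset.sum_subset (Finset.subset_univ _) hzero).symm
      have h2'' : ∑ j ∈ I.image ji, z j ^ 2 = ∑ _j ∈ I.image ji, w ^ 2 :=
        Finset.sum_congr rfl (fun j hj => by
          obtain ⟨i, hi, rfl⟩ := Finset.mem_image.mp hj
          rw [hw i hi])
      rw [h1, h2'', Finset.sum_const, Finset.card_image_of_injective I hjiinj,
        nsmul_eq_mul]
    -- combine
    obtain ⟨i0, hi0⟩ := hI
    have heq := h4 i0 hi0
    rw [hw i0 hi0, hT] at heq
    have hIw : Complex.I * w = -2 := by
      linear_combination w * hmw - heq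
    have hcard : (2 : ℂ) * (I.card : ℂ) = 1 := by
      linear_combination (I.card : ℂ) * hIw - Complex.I * hmw - Complex.I_sq
    have : ((2 * I.card : ℕ) : ℂ) = ((1 : ℕ) : ℂ) := by push_cast; linear_combination hcard
    have h21 : 2 * I.card = 1 := Nat.cast_injective this
    omega
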